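/- Lemma (one Euler step preserves Lipschitz continuity of expectations): Let G be a standard d-dimensional Gaussian vector, h > 0, and b: ℝ^d → ℝ^d, σ: ℝ^d → ℝ^{d×d} Lipschitz with constants C_b and C_σ respectively (σ in Frobenius norm). If φ: ℝ^d → ℝ is Lipschitz with constant C, then the map x ↦ E[φ(x + b(x)h + σ(x)√h G)] is Lipschitz with constant C(1 + L h), where L := C_b + C_σ²/2. -/

import Mathlib

open MeasureTheory ProbabilityTheory

/-- The Euclidean norm on `Fin n → ℝ`. -/
noncomputable def vnorm {n : ℕ} (x : Fin n → ℝ) : ℝ := Real.sqrt (∑ i, x i ^ 2)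

/-- The Frobenius norm of a `d × d` real matrix. -/
noncomputable def frobNorm {n : ℕ} (A : Matrix (Fin n) (Fin n) ℝ) : ℝ :=
  Real.sqrt (∑ i, ∑ j, A i j ^ 2)

namespace EulerAux

open Real Filter
open scoped NNReal ENNReal

/-! ### Gaussian integral computations -/

lemma integrable_sq_exp {b : ℝ} (hb : 0 < b) :
    Integrable (fun x : ℝ => x ^ 2 * rexp (-b * x ^ 2)) := by
  have := integrable_rpow_mul_exp_neg_mul_sq hb (s := 2) (by norm_num)
  refine this.congr ?_
  filter_upwards with x
  rw [show ((2 : ℝ) = ((2 : ℕ) : ℝ)) by norm_num, Real.rpow_natCast]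

lemma tendsto_mul_exp : Tendsto (fun x : ℝ => x * rexp (-(1/2) * x ^ 2)) atTop (nhds 0) := by
  have h := tendsto_rpow_abs_mul_exp_neg_mul_sq_cocompact (a := 1/2) (by norm_num) 1
  have h2 : Tendsto (fun x : ℝ => |x| ^ (1:ℝ) * rexp (-(1/2) * x ^ 2)) atTop (nhds 0) :=
    h.mono_left (by rw [cocompact_eq_atBot_atTop]; exact le_sup_right)
  refine h2.congr' ?_
  filter_upwards [eventually_ge_atTop (0:ℝ)] with x hx
  rw [Real.rpow_one, abs_of_nonneg hx]

lemma integral_sq_exp_half : ∫ x : ℝ, x ^ 2 * rexp (-(1/2) * x ^ 2) = Real.sqrt (2 * π) := by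
  have hb : (0:ℝ) < 1/2 := by norm_num
  have hderiv : ∀ x ∈ Set.Ioi (0:ℝ), HasDerivAt (fun x : ℝ => x * rexp (-(1/2) * x ^ 2))
      (rexp (-(1/2) * x ^ 2) - x ^ 2 * rexp (-(1/2) * x ^ 2)) x := by
    intro x _
    have h1 : HasDerivAt (fun x : ℝ => -(1/2) * x ^ 2) (-(1/2) * (2 * x)) x := by
      simpa using ((hasDerivAt_pow 2 x).const_mul (-(1/2):ℝ))
    have h2 : HasDerivAt (fun x : ℝ => x * rexp (-(1/2) * x ^ 2))
        (1 * rexp (-(1 / 2) * x ^ 2) + x * (rexp (-(1 / 2) * x ^ 2) * (-(1 / 2) * (2 * x)))) x :=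
      (hasDerivAt_id x).mul h1.exp
    convert h2 using 1
    ring
  have hcont : ContinuousWithinAt (fun x : ℝ => x * rexp (-(1/2) * x ^ 2)) (Set.Ici 0) 0 :=
    (continuous_id.mul ((continuous_const.mul (continuous_pow 2)).rexp)).continuousWithinAt
  have hint : IntegrableOn (fun x : ℝ =>
      rexp (-(1/2) * x ^ 2) - x ^ 2 * rexp (-(1/2) * x ^ 2)) (Set.Ioi 0) := by
    exact ((integrable_exp_neg_mul_sq hb).sub (integrable_sq_exp hb)).integrableOn
  have key := integral_Ioi_of_hasDerivAt_of_tendsto hcont hderiv hint tendsto_mul_exp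
  simp only [mul_zero, zero_mul, sub_zero, zero_sub] at key
  have hIsub : ∫ x in Set.Ioi (0:ℝ), (rexp (-(1/2) * x ^ 2) - x ^ 2 * rexp (-(1/2) * x ^ 2))
      = (∫ x in Set.Ioi (0:ℝ), rexp (-(1/2) * x ^ 2)) - ∫ x in Set.Ioi (0:ℝ), x ^ 2 * rexp (-(1/2) * x ^ 2) :=
    integral_sub (integrable_exp_neg_mul_sq hb).integrableOn (integrable_sq_exp hb).integrableOn
  have hIoi : ∫ x in Set.Ioi (0:ℝ), x ^ 2 * rexp (-(1/2) * x ^ 2) = Real.sqrt (2 * π) / 2 := by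
    have hg : ∫ x in Set.Ioi (0:ℝ), rexp (-(1/2) * x ^ 2) = Real.sqrt (2 * π) / 2 := by
      rw [integral_gaussian_Ioi, show π/(1/2) = 2*π by ring]
    nlinarith [key, hIsub, hg]
  have habs : ∫ x : ℝ, x ^ 2 * rexp (-(1/2) * x ^ 2)
      = 2 * ∫ x in Set.Ioi (0:ℝ), x ^ 2 * rexp (-(1/2) * x ^ 2) := by
    rw [← integral_comp_abs (f := fun x : ℝ => x ^ 2 * rexp (-(1/2) * x ^ 2))]
    congr 1; funext x; rw [sq_abs]
  rw [habs, hIoi]; ring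

/-! ### Moments of the standard Gaussian measure -/

lemma gaussianPDFReal_01 (x : ℝ) :
    gaussianPDFReal 0 1 x = (Real.sqrt (2 * π))⁻¹ * rexp (-(1/2) * x ^ 2) := by
  simp only [gaussianPDFReal, NNReal.coe_one, mul_one, sub_zero]
  ring_nf

lemma integral_gaussianReal (f : ℝ → ℝ) :
    ∫ x, f x ∂(gaussianReal 0 1) = ∫ x, gaussianPDFReal 0 1 x * f x := by
  rw [gaussianReal_of_var_ne_zero 0 one_ne_zero]
  rw [show gaussianPDF 0 1 = fun x => ((Real.toNNReal (gaussianPDFReal 0 1 x) : ℝ≥0) : ℝ≥0∞) from rfl]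
  rw [integral_withDensity_eq_integral_smul ((measurable_gaussianPDFReal 0 1).real_toNNReal) f]
  congr 1; funext x
  rw [NNReal.smul_def, Real.coe_toNNReal _ (gaussianPDFReal_nonneg 0 1 x), smul_eq_mul]

lemma integrable_gaussianReal_iff {f : ℝ → ℝ} :
    Integrable f (gaussianReal 0 1) ↔ Integrable (fun x => gaussianPDFReal 0 1 x * f x) := by
  rw [gaussianReal_of_var_ne_zero 0 one_ne_zero]
  rw [show gaussianPDF 0 1 = fun x => ((Real.toNNReal (gaussianPDFReal 0 1 x) : ℝ≥0) : ℝ≥0∞) from rfl]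
  rw [integrable_withDensity_iff_integrable_smul ((measurable_gaussianPDFReal 0 1).real_toNNReal)]
  constructor <;> intro h <;> refine h.congr ?_ <;> filter_upwards with x <;>
    rw [NNReal.smul_def, Real.coe_toNNReal _ (gaussianPDFReal_nonneg 0 1 x), smul_eq_mul]

lemma sqrt_two_pi_pos : (0:ℝ) < Real.sqrt (2 * π) :=
  Real.sqrt_pos.mpr (by positivity)

lemma integrable_id_gaussian : Integrable (fun x : ℝ => x) (gaussianReal 0 1) := by
  rw [integrable_gaussianReal_iff]
  have := (integrable_mul_exp_neg_mul_sq (b := 1/2) (by norm_num)).const_mul (Real.sqrt (2 * π))⁻¹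
  refine this.congr ?_
  filter_upwards with x
  rw [gaussianPDFReal_01]; ring

lemma integral_id_gaussian : ∫ x, (x : ℝ) ∂(gaussianReal 0 1) = 0 := by
  rw [integral_gaussianReal]
  have hodd : ∀ x : ℝ, gaussianPDFReal 0 1 (-x) * (-x) = -(gaussianPDFReal 0 1 x * x) := by
    intro x; rw [gaussianPDFReal_01, gaussianPDFReal_01, neg_pow, pow_two]; ring_nf
  have := integral_neg_eq_self (fun x : ℝ => gaussianPDFReal 0 1 x * x) (volume : Measure ℝ)
  simp only [hodd, integral_neg] at this
  linarith

lemma integrable_sq_gaussian : Integrable (fun x : ℝ => x * x) (gaussianReal 0 1) := by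
  rw [integrable_gaussianReal_iff]
  have := (integrable_sq_exp (b := 1/2) (by norm_num)).const_mul (Real.sqrt (2 * π))⁻¹
  refine this.congr ?_
  filter_upwards with x
  rw [gaussianPDFReal_01]; ring

lemma integral_sq_gaussian : ∫ x, (x * x : ℝ) ∂(gaussianReal 0 1) = 1 := by
  rw [integral_gaussianReal]
  have h : (fun x : ℝ => gaussianPDFReal 0 1 x * (x * x))
      = fun x : ℝ => (Real.sqrt (2 * π))⁻¹ * (x ^ 2 * rexp (-(1/2) * x ^ 2)) := by
    funext x; rw [gaussianPDFReal_01]; ring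
  rw [h, integral_const_mul, integral_sq_exp_half, inv_mul_cancel₀ (ne_of_gt sqrt_two_pi_pos)]

/-! ### Product measure lemmas -/

theorem my_integrable_pi_prod {n : ℕ} (μ : Fin n → Measure ℝ) [∀ i, SigmaFinite (μ i)]
    {f : Fin n → ℝ → ℝ} (hf : ∀ i, Integrable (f i) (μ i)) :
    Integrable (fun x : Fin n → ℝ => ∏ i, f i (x i)) (Measure.pi μ) := by
  induction n with
  | zero =>
      simp only [Finset.univ_eq_empty, Finset.prod_empty]
      have : (Measure.pi μ) Set.univ = 1 := by
        rw [← Set.pi_univ Set.univ, Measure.pi_pi]; simp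
      rw [integrable_const_iff]
      right; exact ⟨by rw [this]; exact ENNReal.one_lt_top⟩
  | succ n n_ih =>
      have hmp := (measurePreserving_piFinSuccAbove (fun i => μ i) 0).symm
      rw [← hmp.integrable_comp_emb (MeasurableEquiv.measurableEmbedding _)]
      simp_rw [MeasurableEquiv.piFinSuccAbove_symm_apply, Fin.insertNthEquiv,
        Fin.prod_univ_succ, Fin.insertNth_zero]
      simp only [Fin.zero_succAbove, cast_eq, Function.comp_def, Fin.cons_zero, Fin.cons_succ,
        Equiv.coe_fn_mk]
      have : Integrable (fun x : Fin n → ℝ => ∏ j, f (Fin.succ j) (x j))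
          (Measure.pi fun j => μ (Fin.succ j)) := n_ih _ (fun i => hf _)
      exact Integrable.mul_prod (hf 0) this

theorem my_integral_pi_prod {n : ℕ} (μ : Fin n → Measure ℝ) [∀ i, SigmaFinite (μ i)]
    (f : Fin n → ℝ → ℝ) :
    ∫ x : Fin n → ℝ, ∏ i, f i (x i) ∂Measure.pi μ = ∏ i, ∫ x, f i x ∂μ i := by
  induction n with
  | zero =>
      have : (Measure.pi μ) Set.univ = 1 := by
        rw [← Set.pi_univ Set.univ, Measure.pi_pi]; simp
      simp only [Finset.univ_eq_empty, Finset.prod_empty, integral_const, this,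
        measureReal_def, ENNReal.toReal_one, smul_eq_mul, mul_one, one_smul]
  | succ n n_ih =>
      calc
        _ = ∫ x : ℝ × (Fin n → ℝ),
            f 0 x.1 * ∏ i : Fin n, f (Fin.succ i) (x.2 i) ∂(μ 0).prod (Measure.pi fun j => μ (Fin.succ j)) := by
          rw [← ((measurePreserving_piFinSuccAbove (fun i => μ i) 0).symm).integral_comp']
          simp_rw [MeasurableEquiv.piFinSuccAbove_symm_apply, Fin.insertNthEquiv,
            Fin.prod_univ_succ, Fin.insertNth_zero, Equiv.coe_fn_mk, Fin.cons_succ,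
            Fin.zero_succAbove, Fin.cons_zero, cast_eq]
        _ = (∫ x, f 0 x ∂μ 0) * ∏ i : Fin n, ∫ x, f (Fin.succ i) x ∂μ (Fin.succ i) := by
          rw [← n_ih, ← integral_prod_mul]
        _ = ∏ i, ∫ x, f i x ∂μ i := by rw [Fin.prod_univ_succ]

theorem pi_map_eval' {n : ℕ} (μ : Fin n → Measure ℝ) [∀ i, IsProbabilityMeasure (μ i)] (j : Fin n) :
    Measure.map (fun g : Fin n → ℝ => g j) (Measure.pi μ) = μ j := by
  ext s hs
  rw [Measure.map_apply (measurable_pi_apply j) hs]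
  have hpre : (fun g : Fin n → ℝ => g j) ⁻¹' s
      = Set.pi Set.univ (Function.update (fun _ => Set.univ) j s) := by
    ext g
    simp only [Set.mem_preimage, Set.mem_pi, Set.mem_univ, true_implies]
    constructor
    · intro hg i
      rcases eq_or_ne i j with rfl | hij
      · rwa [Function.update_self]
      · rw [Function.update_of_ne hij]; trivial
    · intro hg; have := hg j; rwa [Function.update_self] at this
  rw [hpre, Measure.pi_pi]
  rw [Finset.prod_eq_single j (fun i _ hij => by rw [Function.update_of_ne hij]; simp)
    (fun hj => absurd (Finset.mem_univ j) hj)]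
  rw [Function.update_self]

variable {d : ℕ}

noncomputable abbrev gpi (d : ℕ) : Measure (Fin d → ℝ) :=
  Measure.pi fun _ : Fin d => gaussianReal 0 1

lemma integrable_eval_comp (j : Fin d) {f : ℝ → ℝ} (hf : Measurable f)
    (hint : Integrable f (gaussianReal 0 1)) :
    Integrable (fun g : Fin d → ℝ => f (g j)) (gpi d) := by
  have := (integrable_map_measure (hf.aestronglyMeasurable)
    (measurable_pi_apply j).aemeasurable (μ := gpi d)).mp
  rw [pi_map_eval'] at this
  exact this hint

lemma integral_eval_comp (j : Fin d) {f : ℝ → ℝ} (hf : Measurable f) :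
    ∫ g : Fin d → ℝ, f (g j) ∂(gpi d) = ∫ x, f x ∂(gaussianReal 0 1) := by
  rw [← pi_map_eval' (fun _ : Fin d => gaussianReal 0 1) j,
    integral_map (measurable_pi_apply j).aemeasurable]
  rw [pi_map_eval']
  exact hf.aestronglyMeasurable

lemma integrable_eval (j : Fin d) : Integrable (fun g : Fin d → ℝ => g j) (gpi d) :=
  integrable_eval_comp j measurable_id integrable_id_gaussian

lemma integral_eval (j : Fin d) : ∫ g : Fin d → ℝ, g j ∂(gpi d) = 0 := by
  rw [show (fun g : Fin d → ℝ => g j) = (fun g : Fin d → ℝ => (fun x : ℝ => x) (g j)) from rfl,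
    integral_eval_comp j (f := fun x => x) measurable_id]
  exact integral_id_gaussian

lemma integrable_eval_mul (j k : Fin d) :
    Integrable (fun g : Fin d → ℝ => g j * g k) (gpi d) := by
  rcases eq_or_ne j k with rfl | hjk
  · exact integrable_eval_comp j (measurable_id.mul measurable_id) integrable_sq_gaussian
  · classical
    have hf : ∀ i : Fin d, Integrable
        (fun x : ℝ => if i = j ∨ i = k then x else 1) (gaussianReal 0 1) := by
      intro i
      by_cases hi : i = j ∨ i = k
      · simpa [hi] using integrable_id_gaussian
      · simpa [hi] using (integrable_const (1:ℝ))
    have := my_integrable_pi_prod (fun _ : Fin d => gaussianReal 0 1) hf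
    refine this.congr ?_
    filter_upwards with g
    classical
    have hsplit := Finset.prod_filter_mul_prod_filter_not Finset.univ
      (fun i : Fin d => i = j ∨ i = k) (fun i => if i = j ∨ i = k then g i else (1:ℝ))
    have hset : Finset.univ.filter (fun i : Fin d => i = j ∨ i = k) = {j, k} := by
      ext i; simp [Finset.mem_filter, Finset.mem_insert]
    rw [← hsplit, hset]
    have h1 : ∏ i ∈ ({j, k} : Finset (Fin d)), (if i = j ∨ i = k then g i else (1:ℝ))
        = ∏ i ∈ ({j, k} : Finset (Fin d)), g i := by
      refine Finset.prod_congr rfl (fun i hi => ?_)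
      simp only [Finset.mem_insert, Finset.mem_singleton] at hi
      simp [hi]
    have h2 : ∏ i ∈ Finset.univ.filter (fun i : Fin d => ¬(i = j ∨ i = k)),
        (if i = j ∨ i = k then g i else (1:ℝ)) = 1 := by
      refine Finset.prod_eq_one (fun i hi => ?_)
      simp only [Finset.mem_filter] at hi
      simp [hi.2]
    rw [h1, h2, Finset.prod_pair hjk, mul_one]

lemma integral_eval_mul (j k : Fin d) :
    ∫ g : Fin d → ℝ, g j * g k ∂(gpi d) = if j = k then 1 else 0 := by
  rcases eq_or_ne j k with rfl | hjk
  · rw [if_pos rfl,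
      show (fun g : Fin d → ℝ => g j * g j) = (fun g : Fin d → ℝ => (fun x : ℝ => x * x) (g j)) from rfl,
      integral_eval_comp j (f := fun x => x * x) (measurable_id.mul measurable_id)]
    exact integral_sq_gaussian
  · rw [if_neg hjk]
    classical
    have key := my_integral_pi_prod (fun _ : Fin d => gaussianReal 0 1)
      (fun i x => if i = j ∨ i = k then x else 1)
    have hprodfun : ∀ g : Fin d → ℝ,
        (∏ i, (if i = j ∨ i = k then g i else (1:ℝ))) = g j * g k := by
      intro g
      have hsplit := Finset.prod_filter_mul_prod_filter_not Finset.univ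
        (fun i : Fin d => i = j ∨ i = k) (fun i => if i = j ∨ i = k then g i else (1:ℝ))
      have hset : Finset.univ.filter (fun i : Fin d => i = j ∨ i = k) = {j, k} := by
        ext i; simp [Finset.mem_filter, Finset.mem_insert]
      rw [← hsplit, hset]
      have h1 : ∏ i ∈ ({j, k} : Finset (Fin d)), (if i = j ∨ i = k then g i else (1:ℝ))
          = ∏ i ∈ ({j, k} : Finset (Fin d)), g i := by
        refine Finset.prod_congr rfl (fun i hi => ?_)
        simp only [Finset.mem_insert, Finset.mem_singleton] at hi
        simp [hi]
      have h2 : ∏ i ∈ Finset.univ.filter (fun i : Fin d => ¬(i = j ∨ i = k)),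
          (if i = j ∨ i = k then g i else (1:ℝ)) = 1 := by
        refine Finset.prod_eq_one (fun i hi => ?_)
        simp only [Finset.mem_filter] at hi
        simp [hi.2]
      rw [h1, h2, Finset.prod_pair hjk, mul_one]
    simp_rw [hprodfun] at key
    rw [key]
    refine Finset.prod_eq_zero (Finset.mem_univ j) ?_
    simp only [true_or, if_pos]
    simpa using integral_id_gaussian

/-! ### vnorm lemmas -/

lemma vnorm_nonneg (z : Fin d → ℝ) : 0 ≤ vnorm z := Real.sqrt_nonneg _

lemma vnorm_sq (z : Fin d → ℝ) : vnorm z ^ 2 = ∑ i, z i ^ 2 :=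
  Real.sq_sqrt (Finset.sum_nonneg fun _ _ => sq_nonneg _)

lemma frobNorm_nonneg (A : Matrix (Fin d) (Fin d) ℝ) : 0 ≤ frobNorm A := Real.sqrt_nonneg _

lemma frobNorm_sq (A : Matrix (Fin d) (Fin d) ℝ) : frobNorm A ^ 2 = ∑ i, ∑ j, A i j ^ 2 :=
  Real.sq_sqrt (Finset.sum_nonneg fun _ _ => Finset.sum_nonneg fun _ _ => sq_nonneg _)

lemma vnorm_eq_norm (z : Fin d → ℝ) : vnorm z = ‖(WithLp.equiv 2 (Fin d → ℝ)).symm z‖ := by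
  rw [EuclideanSpace.norm_eq]
  unfold vnorm
  congr 1
  refine Finset.sum_congr rfl (fun i _ => ?_)
  rw [WithLp.equiv_symm_apply, WithLp.ofLp_toLp, Real.norm_eq_abs, sq_abs]

lemma vnorm_add_le (u w : Fin d → ℝ) : vnorm (u + w) ≤ vnorm u + vnorm w := by
  rw [vnorm_eq_norm, vnorm_eq_norm, vnorm_eq_norm]
  exact norm_add_le ((WithLp.equiv 2 (Fin d → ℝ)).symm u) ((WithLp.equiv 2 (Fin d → ℝ)).symm w)

lemma vnorm_smul (c : ℝ) (z : Fin d → ℝ) : vnorm (c • z) = |c| * vnorm z := by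
  rw [vnorm_eq_norm, vnorm_eq_norm]
  rw [show (WithLp.equiv 2 (Fin d → ℝ)).symm (c • z) = c • (WithLp.equiv 2 (Fin d → ℝ)).symm z from rfl]
  rw [norm_smul, Real.norm_eq_abs]

lemma eq_of_vnorm_sub_eq_zero {x y : Fin d → ℝ} (hv : vnorm (x - y) = 0) : x = y := by
  have h1 : ∑ i, (x i - y i) ^ 2 = 0 := by
    have := vnorm_sq (x - y)
    rw [hv] at this
    simpa using this.symm
  funext i
  have h2 := (Finset.sum_eq_zero_iff_of_nonneg (fun i _ => sq_nonneg (x i - y i))).mp h1 i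
    (Finset.mem_univ i)
  have := pow_eq_zero_iff (n := 2) (by norm_num) |>.mp h2
  linarith

lemma vnorm_le_card_norm (z : Fin d → ℝ) : vnorm z ≤ Real.sqrt d * ‖z‖ := by
  have h1 : ∑ i, z i ^ 2 ≤ ∑ _i : Fin d, ‖z‖ ^ 2 := by
    refine Finset.sum_le_sum (fun i _ => ?_)
    have := norm_le_pi_norm z i
    have h0 : |z i| ≤ ‖z‖ := by rwa [← Real.norm_eq_abs]
    nlinarith [abs_nonneg (z i), neg_abs_le (z i), le_abs_self (z i)]
  have h2 : vnorm z ≤ Real.sqrt (∑ _i : Fin d, ‖z‖ ^ 2) := Real.sqrt_le_sqrt h1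
  calc vnorm z ≤ Real.sqrt (∑ _i : Fin d, ‖z‖ ^ 2) := h2
    _ = Real.sqrt (d * ‖z‖ ^ 2) := by rw [Finset.sum_const, Finset.card_univ, Fintype.card_fin,
        nsmul_eq_mul]
    _ = Real.sqrt d * ‖z‖ := by
        rw [Real.sqrt_mul (by positivity), Real.sqrt_sq (norm_nonneg z)]

lemma continuous_of_vnorm_lip {C : ℝ} {φ : (Fin d → ℝ) → ℝ}
    (hφ : ∀ x y, |φ x - φ y| ≤ C * vnorm (x - y)) : Continuous φ := by
  set K := max C 0 * Real.sqrt d with hK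
  have hK0 : 0 ≤ K := mul_nonneg (le_max_right C 0) (Real.sqrt_nonneg _)
  refine LipschitzWith.continuous (K := K.toNNReal) (LipschitzWith.of_dist_le_mul fun x y => ?_)
  rw [Real.dist_eq, Real.coe_toNNReal _ hK0, dist_eq_norm]
  calc |φ x - φ y| ≤ C * vnorm (x - y) := hφ x y
    _ ≤ max C 0 * vnorm (x - y) :=
        mul_le_mul_of_nonneg_right (le_max_left C 0) (vnorm_nonneg _)
    _ ≤ max C 0 * (Real.sqrt d * ‖x - y‖) :=
        mul_le_mul_of_nonneg_left (vnorm_le_card_norm _) (le_max_right C 0)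
    _ = K * ‖x - y‖ := by ring

lemma continuous_vnorm : Continuous (vnorm (n := d)) := by
  unfold vnorm
  exact Real.continuous_sqrt.comp (continuous_finset_sum _ fun i _ => (continuous_apply i).pow 2)

lemma mulVec_apply' (A : Matrix (Fin d) (Fin d) ℝ) (g : Fin d → ℝ) (i : Fin d) :
    A.mulVec g i = ∑ j, A i j * g j := rfl

lemma continuous_mulVec (A : Matrix (Fin d) (Fin d) ℝ) (i : Fin d) :
    Continuous (fun g : Fin d → ℝ => A.mulVec g i) := by
  have : (fun g : Fin d → ℝ => A.mulVec g i) = fun g => ∑ j, A i j * g j := rfl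
  rw [this]
  exact continuous_finset_sum _ fun j _ => continuous_const.mul (continuous_apply j)

/-! ### Quadratic moments under the pi-Gaussian -/

lemma quad_rep (A : Matrix (Fin d) (Fin d) ℝ) (v : Fin d → ℝ) (r : ℝ) (i : Fin d) :
    (fun g : Fin d → ℝ => (v i + r * A.mulVec g i) ^ 2)
      = fun g => v i ^ 2 + (2 * v i * r) * (∑ j, A i j * g j)
          + r ^ 2 * (∑ j, ∑ k, (A i j * A i k) * (g j * g k)) := by
  funext g
  rw [mulVec_apply']
  have hsq : (∑ j, A i j * g j) ^ 2 = ∑ j, ∑ k, (A i j * A i k) * (g j * g k) := by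
    rw [sq, Finset.sum_mul_sum]
    exact Finset.sum_congr rfl fun j _ => Finset.sum_congr rfl fun k _ => by ring
  nlinarith [hsq]

lemma quad_term_integrable (A : Matrix (Fin d) (Fin d) ℝ) (v : Fin d → ℝ) (r : ℝ) (i : Fin d) :
    Integrable (fun g : Fin d → ℝ => (v i + r * A.mulVec g i) ^ 2) (gpi d) := by
  rw [quad_rep]
  have hlin : Integrable (fun g : Fin d → ℝ => ∑ j, A i j * g j) (gpi d) :=
    integrable_finset_sum _ fun j _ => (integrable_eval j).const_mul _
  have hquad : Integrable (fun g : Fin d → ℝ => ∑ j, ∑ k, (A i j * A i k) * (g j * g k)) (gpi d) :=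
    integrable_finset_sum _ fun j _ =>
      integrable_finset_sum _ fun k _ => (integrable_eval_mul j k).const_mul _
  exact ((integrable_const _).add (hlin.const_mul _)).add (hquad.const_mul _)

lemma quad_term_integral (A : Matrix (Fin d) (Fin d) ℝ) (v : Fin d → ℝ) (r : ℝ) (i : Fin d) :
    ∫ g, (v i + r * A.mulVec g i) ^ 2 ∂(gpi d) = v i ^ 2 + r ^ 2 * ∑ j, A i j ^ 2 := by
  rw [quad_rep]
  have hlin : Integrable (fun g : Fin d → ℝ => ∑ j, A i j * g j) (gpi d) :=
    integrable_finset_sum _ fun j _ => (integrable_eval j).const_mul _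
  have hquad : Integrable (fun g : Fin d → ℝ => ∑ j, ∑ k, (A i j * A i k) * (g j * g k)) (gpi d) :=
    integrable_finset_sum _ fun j _ =>
      integrable_finset_sum _ fun k _ => (integrable_eval_mul j k).const_mul _
  rw [integral_add (f := fun g : Fin d → ℝ => v i ^ 2 + 2 * v i * r * ∑ j, A i j * g j)
      (g := fun g : Fin d → ℝ => r ^ 2 * ∑ j, ∑ k, A i j * A i k * (g j * g k))
      ((integrable_const _).add (hlin.const_mul _)) (hquad.const_mul _),
    integral_add (f := fun _ : Fin d → ℝ => v i ^ 2)
      (g := fun g : Fin d → ℝ => 2 * v i * r * ∑ j, A i j * g j)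
      (integrable_const _) (hlin.const_mul _),
    integral_const, integral_const_mul, integral_const_mul]
  have h1 : ∫ g, (∑ j, A i j * g j) ∂(gpi d) = 0 := by
    rw [integral_finset_sum _ fun j _ => (integrable_eval j).const_mul _]
    refine Finset.sum_eq_zero fun j _ => ?_
    rw [integral_const_mul, integral_eval, mul_zero]
  have h2 : ∫ g, (∑ j, ∑ k, (A i j * A i k) * (g j * g k)) ∂(gpi d) = ∑ j, A i j ^ 2 := by
    rw [integral_finset_sum _ fun j _ =>
      integrable_finset_sum _ fun k _ => (integrable_eval_mul j k).const_mul _]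
    refine Finset.sum_congr rfl fun j _ => ?_
    rw [integral_finset_sum _ fun k _ => (integrable_eval_mul j k).const_mul _]
    have : ∀ k, k ∈ Finset.univ → (∫ g, (A i j * A i k) * (g j * g k) ∂(gpi d))
        = (A i j * A i k) * if j = k then 1 else 0 := by
      intro k _; rw [integral_const_mul, integral_eval_mul]
    rw [Finset.sum_congr rfl this]
    simp [sq]
  rw [h1, h2]
  simp

lemma integrable_quad_sum (A : Matrix (Fin d) (Fin d) ℝ) (v : Fin d → ℝ) (r : ℝ) :
    Integrable (fun g : Fin d → ℝ => ∑ i, (v i + r * A.mulVec g i) ^ 2) (gpi d) :=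
  integrable_finset_sum _ fun i _ => quad_term_integrable A v r i

lemma integral_quad_sum (A : Matrix (Fin d) (Fin d) ℝ) (v : Fin d → ℝ) (r : ℝ) :
    ∫ g, (∑ i, (v i + r * A.mulVec g i) ^ 2) ∂(gpi d)
      = (∑ i, v i ^ 2) + r ^ 2 * ∑ i, ∑ j, A i j ^ 2 := by
  rw [integral_finset_sum _ fun i _ => quad_term_integrable A v r i]
  rw [Finset.sum_congr rfl fun i _ => quad_term_integral A v r i]
  rw [Finset.sum_add_distrib, ← Finset.mul_sum]

lemma continuous_vnorm_affine (A : Matrix (Fin d) (Fin d) ℝ) (v : Fin d → ℝ) (r : ℝ) :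
    Continuous (fun g : Fin d → ℝ => vnorm (fun i => v i + r * A.mulVec g i)) := by
  refine continuous_vnorm.comp (continuous_pi fun i => ?_)
  exact continuous_const.add (continuous_const.mul (continuous_mulVec A i))

lemma integrable_vnorm_affine (A : Matrix (Fin d) (Fin d) ℝ) (v : Fin d → ℝ) (r : ℝ) :
    Integrable (fun g : Fin d → ℝ => vnorm (fun i => v i + r * A.mulVec g i)) (gpi d) := by
  refine Integrable.mono' (g := fun g => (1 + ∑ i, (v i + r * A.mulVec g i) ^ 2) / 2)
    (((integrable_const 1).add (integrable_quad_sum A v r)).div_const 2)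
    (continuous_vnorm_affine A v r).aestronglyMeasurable ?_
  filter_upwards with g
  rw [Real.norm_eq_abs, abs_of_nonneg (vnorm_nonneg _)]
  have hv2 := vnorm_sq (fun i => v i + r * A.mulVec g i)
  nlinarith [sq_nonneg (vnorm (fun i => v i + r * A.mulVec g i) - 1)]

lemma int_le_sqrt_int_sq {α : Type*} [MeasurableSpace α] (ν : Measure α) [IsProbabilityMeasure ν]
    {f : α → ℝ} (hnn : ∀ a, 0 ≤ f a) (hf : Integrable f ν) (hf2 : Integrable (fun a => f a ^ 2) ν) :
    ∫ a, f a ∂ν ≤ Real.sqrt (∫ a, f a ^ 2 ∂ν) := by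
  set m := ∫ a, f a ∂ν with hm
  have hm0 : 0 ≤ m := integral_nonneg hnn
  have hexp : ∀ a, (f a - m) ^ 2 = f a ^ 2 - (2 * m) * f a + m ^ 2 := fun a => by ring
  have h0 : 0 ≤ ∫ a, (f a - m) ^ 2 ∂ν := integral_nonneg fun a => sq_nonneg _
  have hcalc : ∫ a, (f a - m) ^ 2 ∂ν = (∫ a, f a ^ 2 ∂ν) - m ^ 2 := by
    simp_rw [hexp]
    rw [integral_add (f := fun a => f a ^ 2 - 2 * m * f a) (g := fun _ => m ^ 2)
        (hf2.sub (hf.const_mul _)) (integrable_const _),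
      integral_sub hf2 (hf.const_mul _), integral_const_mul, integral_const]
    simp only [measure_univ, probReal_univ, smul_eq_mul, one_mul, ← hm]
    ring
  have hle : m ^ 2 ≤ ∫ a, f a ^ 2 ∂ν := by linarith [hcalc ▸ h0]
  calc m = Real.sqrt (m ^ 2) := (Real.sqrt_sq hm0).symm
    _ ≤ Real.sqrt (∫ a, f a ^ 2 ∂ν) := Real.sqrt_le_sqrt hle

end EulerAux
set_option maxHeartbeats 2000000 in
theorem euler_step_lipschitz
    {Ω : Type*} [MeasurableSpace Ω] (μ : Measure Ω) [IsProbabilityMeasure μ]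
    {d : ℕ} (G : Ω → Fin d → ℝ) (hGmeas : Measurable G)
    (hG : μ.map G = Measure.pi fun _ : Fin d => gaussianReal 0 1)
    (h : ℝ) (hh : 0 < h)
    (b : (Fin d → ℝ) → Fin d → ℝ) (σ : (Fin d → ℝ) → Matrix (Fin d) (Fin d) ℝ)
    (Cb Cσ : ℝ)
    (hb : ∀ x y, vnorm (b x - b y) ≤ Cb * vnorm (x - y))
    (hσ : ∀ x y, frobNorm (σ x - σ y) ≤ Cσ * vnorm (x - y))
    (C : ℝ) (φ : (Fin d → ℝ) → ℝ)
    (hφ : ∀ x y, |φ x - φ y| ≤ C * vnorm (x - y)) :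
    ∀ x y : Fin d → ℝ,
      |(∫ ω, φ (fun i => x i + b x i * h + Real.sqrt h * (σ x).mulVec (G ω) i) ∂μ) -
          ∫ ω, φ (fun i => y i + b y i * h + Real.sqrt h * (σ y).mulVec (G ω) i) ∂μ|
        ≤ C * (1 + (Cb + Cσ ^ 2 / 2) * h) * vnorm (x - y) := by
  classical
  intro x y
  by_cases hxy : x = y
  · subst hxy
    rw [sub_self, abs_zero]
    have h0 : vnorm (x - x) = 0 := by
      rw [sub_self]
      have : (0 : Fin d → ℝ) = fun _ => (0:ℝ) := rfl
      simp [vnorm, this]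
    rw [h0, mul_zero]
  · -- basic positivity facts
    have hs0 : 0 ≤ vnorm (x - y) := EulerAux.vnorm_nonneg _
    have hs : 0 < vnorm (x - y) := by
      rcases lt_or_eq_of_le hs0 with h' | h'
      · exact h'
      · exact absurd (EulerAux.eq_of_vnorm_sub_eq_zero h'.symm) hxy
    obtain ⟨s, hsdef⟩ : ∃ t, vnorm (x - y) = t := ⟨_, rfl⟩
    have hbxy := hb x y
    have hσxy := hσ x y
    have hφxy := hφ x y
    rw [hsdef] at hbxy hσxy hφxy hs hs0 ⊢
    have hC : 0 ≤ C := by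
      have h2 := abs_nonneg (φ x - φ y)
      nlinarith [hφxy]
    have hCb : 0 ≤ Cb := by
      have h2 := EulerAux.vnorm_nonneg (b x - b y)
      nlinarith [hbxy]
    have hφcont : Continuous φ := EulerAux.continuous_of_vnorm_lip hφ
    set r := Real.sqrt h with hrdef
    have hr2 : r ^ 2 = h := Real.sq_sqrt hh.le
    have hr0 : 0 < r := Real.sqrt_pos.mpr hh
    -- change of variables to the pi-Gaussian measure
    have conv : ∀ F : (Fin d → ℝ) → ℝ, Continuous F →
        ∫ ω, F (G ω) ∂μ = ∫ g, F g ∂(EulerAux.gpi d) := by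
      intro F hF
      have : ∫ g, F g ∂(μ.map G) = ∫ ω, F (G ω) ∂μ :=
        integral_map hGmeas.aemeasurable hF.aestronglyMeasurable
      rw [← this, hG]
    have hcontx : Continuous (fun g : Fin d → ℝ =>
        φ (fun i => x i + b x i * h + r * (σ x).mulVec g i)) :=
      hφcont.comp (continuous_pi fun i =>
        continuous_const.add (continuous_const.mul (EulerAux.continuous_mulVec (σ x) i)))
    have hconty : Continuous (fun g : Fin d → ℝ =>
        φ (fun i => y i + b y i * h + r * (σ y).mulVec g i)) :=
      hφcont.comp (continuous_pi fun i =>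
        continuous_const.add (continuous_const.mul (EulerAux.continuous_mulVec (σ y) i)))
    have ex : (∫ ω, φ (fun i => x i + b x i * h + Real.sqrt h * (σ x).mulVec (G ω) i) ∂μ)
        = ∫ g, φ (fun i => x i + b x i * h + r * (σ x).mulVec g i) ∂(EulerAux.gpi d) :=
      conv (fun g => φ (fun i => x i + b x i * h + r * (σ x).mulVec g i)) hcontx
    have ey : (∫ ω, φ (fun i => y i + b y i * h + Real.sqrt h * (σ y).mulVec (G ω) i) ∂μ)
        = ∫ g, φ (fun i => y i + b y i * h + r * (σ y).mulVec g i) ∂(EulerAux.gpi d) :=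
      conv (fun g => φ (fun i => y i + b y i * h + r * (σ y).mulVec g i)) hconty
    rw [ex, ey]
    -- integrability of the two integrands
    have key_int : ∀ z : Fin d → ℝ, Integrable
        (fun g : Fin d → ℝ => φ (fun i => z i + b z i * h + r * (σ z).mulVec g i))
        (EulerAux.gpi d) := by
      intro z
      set u : Fin d → ℝ := fun i => z i + b z i * h with hu
      have hcontz : Continuous (fun g : Fin d → ℝ =>
          φ (fun i => z i + b z i * h + r * (σ z).mulVec g i)) :=
        hφcont.comp (continuous_pi fun i =>
          continuous_const.add (continuous_const.mul (EulerAux.continuous_mulVec (σ z) i)))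
      refine Integrable.mono'
        (g := fun g => |φ u| + C * vnorm (fun i => (0:ℝ) + r * (σ z).mulVec g i))
        ((integrable_const _).add ((EulerAux.integrable_vnorm_affine (σ z) 0 r).const_mul C))
        hcontz.aestronglyMeasurable ?_
      filter_upwards with g
      rw [Real.norm_eq_abs]
      have harg : (fun i => z i + b z i * h + r * (σ z).mulVec g i) - u
          = fun i => (0:ℝ) + r * (σ z).mulVec g i := by
        funext i
        simp only [Pi.sub_apply, hu]
        ring
      have hlip := hφ (fun i => z i + b z i * h + r * (σ z).mulVec g i) u
      rw [harg] at hlip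
      calc |φ fun i => z i + b z i * h + r * (σ z).mulVec g i|
          ≤ |φ u| + |φ (fun i => z i + b z i * h + r * (σ z).mulVec g i) - φ u| := by
            have := abs_add_le (φ u) ((φ fun i => z i + b z i * h + r * (σ z).mulVec g i) - φ u)
            simpa using this
        _ ≤ |φ u| + C * vnorm (fun i => (0:ℝ) + r * (σ z).mulVec g i) := by
            linarith [hlip]
    -- the difference vector
    set v : Fin d → ℝ := fun i => (x i - y i) + (b x i - b y i) * h with hv
    set A : Matrix (Fin d) (Fin d) ℝ := σ x - σ y with hA
    have hdiff : ∀ g : Fin d → ℝ,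
        (fun i => x i + b x i * h + r * (σ x).mulVec g i)
          - (fun i => y i + b y i * h + r * (σ y).mulVec g i)
        = fun i => v i + r * A.mulVec g i := by
      intro g
      funext i
      simp only [Pi.sub_apply, hv, hA, Matrix.sub_mulVec]
      ring
    set fnorm : (Fin d → ℝ) → ℝ := fun g => vnorm (fun i => v i + r * A.mulVec g i) with hf
    have hfint : Integrable fnorm (EulerAux.gpi d) := EulerAux.integrable_vnorm_affine A v r
    have hfint2 : Integrable (fun g => fnorm g ^ 2) (EulerAux.gpi d) := by
      refine (EulerAux.integrable_quad_sum A v r).congr ?_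
      filter_upwards with g
      rw [hf]
      exact (EulerAux.vnorm_sq _).symm
    -- step 1: difference of integrals bounded by integral of C * fnorm
    have step1 : |(∫ g, φ (fun i => x i + b x i * h + r * (σ x).mulVec g i) ∂(EulerAux.gpi d)) -
        ∫ g, φ (fun i => y i + b y i * h + r * (σ y).mulVec g i) ∂(EulerAux.gpi d)|
        ≤ C * ∫ g, fnorm g ∂(EulerAux.gpi d) := by
      rw [← integral_sub (key_int x) (key_int y)]
      calc |∫ g, (φ (fun i => x i + b x i * h + r * (σ x).mulVec g i)
              - φ (fun i => y i + b y i * h + r * (σ y).mulVec g i)) ∂(EulerAux.gpi d)|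
          ≤ ∫ g, |φ (fun i => x i + b x i * h + r * (σ x).mulVec g i)
              - φ (fun i => y i + b y i * h + r * (σ y).mulVec g i)| ∂(EulerAux.gpi d) := by
            simpa [Real.norm_eq_abs] using norm_integral_le_integral_norm
              (μ := EulerAux.gpi d) (f := fun g =>
                φ (fun i => x i + b x i * h + r * (σ x).mulVec g i)
                  - φ (fun i => y i + b y i * h + r * (σ y).mulVec g i))
        _ ≤ ∫ g, C * fnorm g ∂(EulerAux.gpi d) := by
            refine integral_mono ((key_int x).sub (key_int y)).abs (hfint.const_mul C) ?_
            intro g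
            have := hφ (fun i => x i + b x i * h + r * (σ x).mulVec g i)
              (fun i => y i + b y i * h + r * (σ y).mulVec g i)
            rw [hdiff g] at this
            exact this
        _ = C * ∫ g, fnorm g ∂(EulerAux.gpi d) := integral_const_mul C _
    -- step 2: Cauchy-Schwarz
    have step2 : ∫ g, fnorm g ∂(EulerAux.gpi d)
        ≤ Real.sqrt (∫ g, fnorm g ^ 2 ∂(EulerAux.gpi d)) :=
      EulerAux.int_le_sqrt_int_sq _ (fun g => EulerAux.vnorm_nonneg _) hfint hfint2
    -- step 3: compute the second moment
    have step3 : ∫ g, fnorm g ^ 2 ∂(EulerAux.gpi d)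
        = vnorm v ^ 2 + h * frobNorm A ^ 2 := by
      have : ∫ g, fnorm g ^ 2 ∂(EulerAux.gpi d)
          = ∫ g, (∑ i, (v i + r * A.mulVec g i) ^ 2) ∂(EulerAux.gpi d) := by
        refine integral_congr_ae ?_
        filter_upwards with g
        rw [hf]
        exact EulerAux.vnorm_sq _
      rw [this, EulerAux.integral_quad_sum, EulerAux.vnorm_sq, EulerAux.frobNorm_sq, hr2]
    -- step 4: arithmetic
    have hvbound : vnorm v ≤ (1 + Cb * h) * s := by
      have hveq : v = (x - y) + h • (b x - b y) := by
        funext i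
        simp only [Pi.add_apply, Pi.sub_apply, Pi.smul_apply, smul_eq_mul, hv]
        ring
      calc vnorm v ≤ vnorm (x - y) + vnorm (h • (b x - b y)) := by
            rw [hveq]
            exact EulerAux.vnorm_add_le _ _
        _ = s + h * vnorm (b x - b y) := by
            rw [hsdef, EulerAux.vnorm_smul, abs_of_pos hh]
        _ ≤ s + h * (Cb * s) := by
            nlinarith [hbxy, hh.le]
        _ = (1 + Cb * h) * s := by ring
    have hAbound : frobNorm A ≤ Cσ * s := hσxy
    set K := (1 + (Cb + Cσ ^ 2 / 2) * h) * s with hKdef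
    have hK0 : 0 ≤ K := by
      have h1 : 0 ≤ (Cb + Cσ ^ 2 / 2) * h := by positivity
      have : 0 ≤ 1 + (Cb + Cσ ^ 2 / 2) * h := by linarith
      exact mul_nonneg this hs0
    have step4 : Real.sqrt (vnorm v ^ 2 + h * frobNorm A ^ 2) ≤ K := by
      have hineq : vnorm v ^ 2 + h * frobNorm A ^ 2 ≤ K ^ 2 := by
        have h1 : vnorm v ^ 2 ≤ ((1 + Cb * h) * s) ^ 2 := by
          nlinarith [EulerAux.vnorm_nonneg v, hvbound]
        have h2 : frobNorm A ^ 2 ≤ (Cσ * s) ^ 2 := by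
          nlinarith [EulerAux.frobNorm_nonneg A, hAbound]
        have h3 : h * frobNorm A ^ 2 ≤ h * (Cσ * s) ^ 2 :=
          mul_le_mul_of_nonneg_left h2 hh.le
        have term1 : 0 ≤ Cb * (h ^ 2 * (Cσ ^ 2 * s ^ 2)) :=
          mul_nonneg hCb (by positivity)
        have haux : ((1 + Cb * h) * s) ^ 2 + h * (Cσ * s) ^ 2 ≤ K ^ 2 := by
          rw [hKdef]
          nlinarith [term1, sq_nonneg (h * Cσ ^ 2 / 2 * s)]
        rw [hKdef] at haux ⊢
        linarith [h1, h3, haux]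
      calc Real.sqrt (vnorm v ^ 2 + h * frobNorm A ^ 2) ≤ Real.sqrt (K ^ 2) :=
            Real.sqrt_le_sqrt hineq
        _ = K := Real.sqrt_sq hK0
    -- conclusion
    calc |(∫ g, φ (fun i => x i + b x i * h + r * (σ x).mulVec g i) ∂(EulerAux.gpi d)) -
        ∫ g, φ (fun i => y i + b y i * h + r * (σ y).mulVec g i) ∂(EulerAux.gpi d)|
        ≤ C * ∫ g, fnorm g ∂(EulerAux.gpi d) := step1
      _ ≤ C * Real.sqrt (∫ g, fnorm g ^ 2 ∂(EulerAux.gpi d)) :=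
          mul_le_mul_of_nonneg_left step2 hC
      _ = C * Real.sqrt (vnorm v ^ 2 + h * frobNorm A ^ 2) := by rw [step3]
      _ ≤ C * K := mul_le_mul_of_nonneg_left step4 hC
      _ = C * (1 + (Cb + Cσ ^ 2 / 2) * h) * s := by rw [hKdef]; ring
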